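/- Let q > 1, let θ_q = arccos(1/√q) ∈ (0, π/2), and let ρ be a C² positive 2π-periodic function with (ln ρ)''(t) < √q/(1+√q) for all t. Then for each α ∈ ℝ the equation (ln ρ)'(θ) = √q·sin(θ−α)/(√q·cos(θ−α)+1) has exactly one solution θ with θ − α ∈ (θ_q − π, π − θ_q) and exactly one solution θ with θ − α ∈ (π − θ_q, π + θ_q). -/

import Mathlib

open Real Filter Set Topology


private lemma existsUnique_zero_aux (a b : ℝ) (hab : a < b) (F : ℝ → ℝ)
    (hcont : ContinuousOn F (Set.Ioo a b))
    (hanti : StrictAntiOn F (Set.Ioo a b))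
    (htop : Tendsto F (𝓝[>] a) atTop)
    (hbot : Tendsto F (𝓝[<] b) atBot) :
    ∃! s, s ∈ Set.Ioo a b ∧ F s = 0 := by
  have hmem1 : Set.Ioo a b ∈ 𝓝[>] a := Ioo_mem_nhdsGT_of_mem ⟨le_rfl, hab⟩
  have hmem2 : Set.Ioo a b ∈ 𝓝[<] b := Ioo_mem_nhdsLT_of_mem ⟨hab, le_rfl⟩
  obtain ⟨s₁, hs₁pos, hs₁mem⟩ :=
    ((htop.eventually_gt_atTop 0).and (eventually_of_mem hmem1 fun x hx => hx)).exists
  obtain ⟨s₂, hs₂neg, hs₂mem⟩ :=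
    ((hbot.eventually_lt_atBot 0).and (eventually_of_mem hmem2 fun x hx => hx)).exists
  have h12 : s₁ < s₂ := by
    rcases lt_trichotomy s₁ s₂ with h | h | h
    · exact h
    · subst h; linarith
    · have := hanti hs₂mem hs₁mem h; linarith
  have hsub : Set.Icc s₁ s₂ ⊆ Set.Ioo a b := fun x hx =>
    ⟨lt_of_lt_of_le hs₁mem.1 hx.1, lt_of_le_of_lt hx.2 hs₂mem.2⟩
  obtain ⟨s, hsmem, hs0⟩ := intermediate_value_Icc' h12.le (hcont.mono hsub)
    (⟨hs₂neg.le, hs₁pos.le⟩ : (0:ℝ) ∈ Set.Icc (F s₂) (F s₁))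
  refine ⟨s, ⟨hsub hsmem, hs0⟩, fun y hy => ?_⟩
  exact hanti.injOn hy.1 (hsub hsmem) (by rw [hy.2, hs0])

private lemma tendsto_div_atTop_aux {l : Filter ℝ} (n d : ℝ → ℝ) (L : ℝ) (hL : 0 < L)
    (hn : Tendsto n l (𝓝 L)) (hd : Tendsto d l (𝓝[>] 0)) :
    Tendsto (fun s => n s / d s) l atTop := by
  have h1 : Tendsto (fun s => (d s)⁻¹) l atTop := tendsto_inv_nhdsGT_zero.comp hd
  simpa [div_eq_mul_inv] using hn.pos_mul_atTop hL h1

private lemma key_aux (c σ : ℝ) (hc : 1 < c) (hσ : σ = 1 ∨ σ = -1) (a b : ℝ) (hab : a < b)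
    (hda : c * Real.cos a + 1 = 0) (hdb : c * Real.cos b + 1 = 0)
    (hna : σ * (c * Real.sin a) < 0) (hnb : 0 < σ * (c * Real.sin b))
    (hd : ∀ s ∈ Set.Ioo a b, 0 < σ * (c * Real.cos s + 1))
    (G G' : ℝ → ℝ) (hG : ∀ s, HasDerivAt G (G' s) s) (hG' : ∀ s, G' s < c / (1 + c)) :
    ∃! s, s ∈ Set.Ioo a b ∧ G s = c * Real.sin s / (c * Real.cos s + 1) := by
  have hσ0 : σ ≠ 0 := by rcases hσ with h | h <;> rw [h] <;> norm_num
  set h : ℝ → ℝ := fun s => c * Real.sin s / (c * Real.cos s + 1) with hh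
  set F : ℝ → ℝ := fun s => G s - h s with hF
  -- derivative of h
  have hderh : ∀ s, c * Real.cos s + 1 ≠ 0 →
      HasDerivAt h ((c ^ 2 + c * Real.cos s) / (c * Real.cos s + 1) ^ 2) s := by
    intro s hne
    have hnum : HasDerivAt (fun s => c * Real.sin s) (c * Real.cos s) s :=
      (Real.hasDerivAt_sin s).const_mul c
    have hden : HasDerivAt (fun s => c * Real.cos s + 1) (c * -Real.sin s) s :=
      ((Real.hasDerivAt_cos s).const_mul c).add_const 1
    have := hnum.div hden hne
    refine this.congr_deriv ?_
    have pyth := Real.sin_sq_add_cos_sq s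
    congr 1
    ring_nf
    nlinarith [pyth]
  -- h' ≥ c/(1+c) on the interval
  have hge : ∀ s ∈ Set.Ioo a b, c / (1 + c) ≤ (c ^ 2 + c * Real.cos s) / (c * Real.cos s + 1) ^ 2 := by
    intro s hs
    have hdne : c * Real.cos s + 1 ≠ 0 := by
      intro h0; have := hd s hs; rw [h0, mul_zero] at this; exact lt_irrefl 0 this
    have hd2 : 0 < (c * Real.cos s + 1) ^ 2 := by positivity
    rw [div_le_div_iff₀ (by linarith) hd2]
    have h1 : Real.cos s ≤ 1 := Real.cos_le_one s
    have h2 : -1 ≤ Real.cos s := Real.neg_one_le_cos s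
    nlinarith [mul_nonneg (sub_nonneg.2 h1) (show (0:ℝ) ≤ c ^ 2 * Real.cos s + c ^ 2 + c - 1 by nlinarith)]
  have hdne : ∀ s ∈ Set.Ioo a b, c * Real.cos s + 1 ≠ 0 := by
    intro s hs h0; have := hd s hs; rw [h0, mul_zero] at this; exact lt_irrefl 0 this
  -- continuity

  have hGc : Continuous G := Differentiable.continuous (fun s => (hG s).differentiableAt)
  have hhc : ContinuousOn h (Set.Ioo a b) := by
    apply ContinuousOn.div
    · fun_prop
    · fun_prop
    · exact hdne
  have hFc : ContinuousOn F (Set.Ioo a b) := hGc.continuousOn.sub hhc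
  -- strict anti
  have hanti : StrictAntiOn F (Set.Ioo a b) := by
    apply strictAntiOn_of_deriv_neg (convex_Ioo a b) hFc
    intro x hx
    rw [interior_Ioo] at hx
    have hFd : HasDerivAt F (G' x - (c ^ 2 + c * Real.cos x) / (c * Real.cos x + 1) ^ 2) x :=
      (hG x).sub (hderh x (hdne x hx))
    rw [hFd.deriv]
    have := hge x hx
    have := hG' x
    linarith
  -- limits
  have habs : ∀ s, σ * (c * Real.sin s) / (σ * (c * Real.cos s + 1)) = h s := by
    intro s; rw [mul_div_mul_left _ _ hσ0]
  have hσd_top : Tendsto (fun s => σ * (c * Real.cos s + 1)) (𝓝[>] a) (𝓝[>] 0) := by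
    rw [tendsto_nhdsWithin_iff]
    constructor
    · have : Continuous (fun s => σ * (c * Real.cos s + 1)) := by fun_prop
      have h0 := (this.tendsto a).mono_left (nhdsWithin_le_nhds (s := Set.Ioi a))
      rw [hda, mul_zero] at h0; exact h0
    · exact eventually_of_mem (Ioo_mem_nhdsGT_of_mem ⟨le_rfl, hab⟩) (fun x hx => hd x hx)
  have hσd_bot : Tendsto (fun s => σ * (c * Real.cos s + 1)) (𝓝[<] b) (𝓝[>] 0) := by
    rw [tendsto_nhdsWithin_iff]
    constructor
    · have : Continuous (fun s => σ * (c * Real.cos s + 1)) := by fun_prop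
      have h0 := (this.tendsto b).mono_left (nhdsWithin_le_nhds (s := Set.Iio b))
      rw [hdb, mul_zero] at h0; exact h0
    · exact eventually_of_mem (Ioo_mem_nhdsLT_of_mem ⟨hab, le_rfl⟩) (fun x hx => hd x hx)
  have htop : Tendsto F (𝓝[>] a) atTop := by
    have hn : Tendsto (fun s => -(σ * (c * Real.sin s))) (𝓝[>] a) (𝓝 (-(σ * (c * Real.sin a)))) := by
      have : Continuous (fun s => -(σ * (c * Real.sin s))) := by fun_prop
      exact (this.tendsto a).mono_left nhdsWithin_le_nhds
    have h1 := tendsto_div_atTop_aux _ _ _ (by linarith : (0:ℝ) < -(σ * (c * Real.sin a))) hn hσd_top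
    have h2 : Tendsto h (𝓝[>] a) atBot := by
      have h3 := tendsto_neg_atTop_atBot.comp h1
      have : (fun s => -(-(σ * (c * Real.sin s)) / (σ * (c * Real.cos s + 1)))) = h := by
        funext s; rw [neg_div, neg_neg, habs]
      rwa [show (Neg.neg ∘ fun s => -(σ * (c * Real.sin s)) / (σ * (c * Real.cos s + 1))) = h from this] at h3
    have hGt : Tendsto G (𝓝[>] a) (𝓝 (G a)) := (hGc.tendsto a).mono_left nhdsWithin_le_nhds
    have := hGt.add_atTop (tendsto_neg_atBot_atTop.comp h2)
    simpa [hF, sub_eq_add_neg, Function.comp] using this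
  have hbot : Tendsto F (𝓝[<] b) atBot := by
    have hn : Tendsto (fun s => σ * (c * Real.sin s)) (𝓝[<] b) (𝓝 (σ * (c * Real.sin b))) := by
      have : Continuous (fun s => σ * (c * Real.sin s)) := by fun_prop
      exact (this.tendsto b).mono_left nhdsWithin_le_nhds
    have h1 := tendsto_div_atTop_aux _ _ _ hnb hn hσd_bot
    have h2 : Tendsto h (𝓝[<] b) atTop := by
      have : (fun s => σ * (c * Real.sin s) / (σ * (c * Real.cos s + 1))) = h := funext habs
      rwa [this] at h1
    have hGt : Tendsto G (𝓝[<] b) (𝓝 (G b)) := (hGc.tendsto b).mono_left nhdsWithin_le_nhds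
    have h3 := hGt.add_atBot (tendsto_neg_atTop_atBot.comp h2)
    simpa [hF, sub_eq_add_neg, Function.comp] using h3
  have := existsUnique_zero_aux a b hab F hFc hanti htop hbot
  obtain ⟨s, ⟨hs1, hs2⟩, huniq⟩ := this
  refine ⟨s, ⟨hs1, by simpa [hF, sub_eq_zero] using hs2⟩, fun y hy => ?_⟩
  exact huniq y ⟨hy.1, by simp [hF, hh, sub_eq_zero, hy.2]⟩


theorem stmt_4 (q : ℝ) (hq : 1 < q) (ρ : ℝ → ℝ)
    (hC2 : ContDiff ℝ 2 ρ) (hpos : ∀ t, 0 < ρ t)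
    (hper : ∀ t, ρ (t + 2 * π) = ρ t)
    (hadm : ∀ t, deriv (deriv (fun s => Real.log (ρ s))) t < Real.sqrt q / (1 + Real.sqrt q))
    (α : ℝ) :
    (∃! θ : ℝ, θ - α ∈ Set.Ioo (Real.arccos (1 / Real.sqrt q) - π) (π - Real.arccos (1 / Real.sqrt q)) ∧
      deriv (fun s => Real.log (ρ s)) θ =
        Real.sqrt q * Real.sin (θ - α) / (Real.sqrt q * Real.cos (θ - α) + 1)) ∧
    (∃! θ : ℝ, θ - α ∈ Set.Ioo (π - Real.arccos (1 / Real.sqrt q)) (π + Real.arccos (1 / Real.sqrt q)) ∧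
      deriv (fun s => Real.log (ρ s)) θ =
        Real.sqrt q * Real.sin (θ - α) / (Real.sqrt q * Real.cos (θ - α) + 1)) := by
  set c := Real.sqrt q with hcdef
  have hc : 1 < c := by
    rw [hcdef, show (1:ℝ) = Real.sqrt 1 by simp]
    exact Real.sqrt_lt_sqrt (by norm_num) hq
  have hc0 : 0 < c := by linarith
  set θq := Real.arccos (1 / c) with hθq
  have hmem : -1 ≤ 1 / c ∧ 1 / c ≤ 1 :=
    ⟨by have : (0:ℝ) ≤ 1 / c := by positivity
        linarith, by rw [div_le_one hc0]; linarith⟩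
  have hcosθq : Real.cos θq = 1 / c := Real.cos_arccos hmem.1 hmem.2
  have hθqpos : 0 < θq := Real.arccos_pos.2 (by rw [div_lt_one hc0]; linarith)
  have hθq2 : θq ≤ π / 2 := Real.arccos_le_pi_div_two.2 (by positivity)
  have hπ : 0 < π := Real.pi_pos
  have hsinθq : 0 < Real.sin θq := by
    rw [hθq, Real.sin_arccos]
    have : (1:ℝ)/c < 1 := by rw [div_lt_one hc0]; linarith
    have h0 : (0:ℝ) < 1 / c := by positivity
    apply Real.sqrt_pos.2; nlinarith [h0, this]
  -- differentiability setup
  set L : ℝ → ℝ := fun s => Real.log (ρ s) with hL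
  have hLC2 : ContDiff ℝ 2 L := hC2.log (fun x => (hpos x).ne')
  have hg1 : ContDiff ℝ 1 (deriv L) := by
    have := (contDiff_succ_iff_deriv (n := 1)).mp (by exact_mod_cast hLC2)
    exact this.2.2
  have hgd : Differentiable ℝ (deriv L) := hg1.differentiable (by norm_num)
  have key : ∀ a b : ℝ, a < b → (c * Real.cos a + 1 = 0) → (c * Real.cos b + 1 = 0) →
      ∀ σ : ℝ, (σ = 1 ∨ σ = -1) → σ * (c * Real.sin a) < 0 → 0 < σ * (c * Real.sin b) →
      (∀ s ∈ Set.Ioo a b, 0 < σ * (c * Real.cos s + 1)) →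
      ∃! θ : ℝ, θ - α ∈ Set.Ioo a b ∧
        deriv L θ = c * Real.sin (θ - α) / (c * Real.cos (θ - α) + 1) := by
    intro a b hab hda hdb σ hσ hna hnb hd
    have hG : ∀ s : ℝ, HasDerivAt (fun s => deriv L (s + α)) (deriv (deriv L) (s + α)) s := by
      intro s
      have h1 : HasDerivAt (fun s : ℝ => s + α) 1 s := (hasDerivAt_id s).add_const α
      have h2 : HasDerivAt (deriv L) (deriv (deriv L) (s + α)) (s + α) :=
        (hgd (s + α)).hasDerivAt
      simpa [Function.comp_def] using h2.comp s h1
    have hG' : ∀ s : ℝ, deriv (deriv L) (s + α) < c / (1 + c) := fun s => hadm (s + α)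
    obtain ⟨s, ⟨hs1, hs2⟩, huniq⟩ :=
      key_aux c σ hc hσ a b hab hda hdb hna hnb hd _ _ hG hG'
    refine ⟨s + α, ⟨by simpa using hs1, by simpa using hs2⟩, fun θ hθ => ?_⟩
    have := huniq (θ - α) ⟨hθ.1, by simpa using hθ.2⟩
    linarith
  constructor
  · -- first interval, σ = 1
    refine key (θq - π) (π - θq) (by linarith) ?_ ?_ 1 (Or.inl rfl) ?_ ?_ ?_
    · rw [show θq - π = -(π - θq) by ring, Real.cos_neg, Real.cos_pi_sub, hcosθq]
      field_simp
      ring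
    · rw [Real.cos_pi_sub, hcosθq]; field_simp; ring
    · rw [show θq - π = -(π - θq) by ring, Real.sin_neg, Real.sin_pi_sub]
      nlinarith
    · rw [Real.sin_pi_sub]; nlinarith
    · intro s hs
      have habs : |s| < π - θq := abs_lt.2 ⟨by linarith [hs.1], hs.2⟩
      have h1 : Real.cos (π - θq) < Real.cos |s| :=
        Real.strictAntiOn_cos ⟨abs_nonneg s, by linarith⟩ ⟨by linarith, by linarith⟩ habs
      rw [Real.cos_abs, Real.cos_pi_sub, hcosθq] at h1
      have h2 : c * (1 / c) = 1 := by field_simp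
      nlinarith [h1, h2, hc0]
  · -- second interval, σ = -1
    refine key (π - θq) (π + θq) (by linarith) ?_ ?_ (-1) (Or.inr rfl) ?_ ?_ ?_
    · rw [Real.cos_pi_sub, hcosθq]; field_simp; ring
    · rw [Real.cos_add, Real.cos_pi, Real.sin_pi, hcosθq]; field_simp; ring
    · rw [Real.sin_pi_sub]; nlinarith
    · rw [Real.sin_add, Real.sin_pi, Real.cos_pi]; nlinarith
    · intro s hs
      have habs : |s - π| < θq := abs_lt.2 ⟨by linarith [hs.1], by linarith [hs.2]⟩
      have h1 : Real.cos θq < Real.cos |s - π| :=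
        Real.strictAntiOn_cos ⟨abs_nonneg _, by linarith⟩ ⟨by linarith, by linarith⟩ habs
      rw [Real.cos_abs, Real.cos_sub_pi, hcosθq] at h1
      have h2 : c * (1 / c) = 1 := by field_simp
      nlinarith [h1, h2, hc0]
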